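/- Under single-source initialization, message passing only touches nodes reachable from the head of the target link: for every k ≥ 0 and every node z that is not reachable from v in T, h^k_z = 0. -/

import Mathlib

/-- `ReachableFrom T v z` means `z = v` or there is a nonempty sequence of triples of `T`,
chained head-to-tail, whose first triple has tail `v` and whose last triple has head `z`. -/
def ReachableFrom {V R : Type*} (T : Finset (V × R × V)) (v z : V) : Prop :=
  z = v ∨ ∃ (l : List (V × R × V)) (hne : l ≠ []),
    (∀ t ∈ l, t ∈ T) ∧ l.Chain' (fun a b => a.2.2 = b.1) ∧
    (l.head hne).1 = v ∧ (l.getLast hne).2.2 = z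

lemma reach_step {V R : Type*} (T : Finset (V × R × V)) (v : V)
    (t : V × R × V) (ht : t ∈ T) (h1 : ReachableFrom T v t.1) :
    ReachableFrom T v t.2.2 := by
  rcases h1 with h1 | ⟨l, hne, hmem, hchain, hhead, hlast⟩
  · exact Or.inr ⟨[t], by simp, by simpa using ht, List.isChain_singleton t, by simp [h1], by simp⟩
  · refine Or.inr ⟨l ++ [t], by simp, ?_, ?_, ?_, ?_⟩
    · intro s hs
      rcases List.mem_append.mp hs with hs | hs
      · exact hmem s hs
      · simp only [List.mem_singleton] at hs; subst hs; exact ht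
    · show List.IsChain _ (l ++ [t]); rw [List.isChain_append]
      refine ⟨hchain, List.isChain_singleton t, ?_⟩
      intro x hx y hy
      simp only [List.head?_cons] at hy
      cases hy
      rw [List.getLast?_eq_getLast hne, Option.mem_def, Option.some_inj] at hx
      rw [← hx, hlast]
    · rw [List.head_append_of_ne_nil hne]; exact hhead
    · simp [List.getLast_append]

theorem node_feature_zero_off_reachable_set
    {V R : Type*} [Fintype V] [Fintype R] [DecidableEq V] [DecidableEq R]
    (T : Finset (V × R × V)) (d : ℕ) (hd : 1 ≤ d) (r : R → Fin d → ℝ)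
    (u v : V) (rt : R) (hT : (u, rt, v) ∈ T) (huv : u ≠ v)
    (h : ℕ → V → Fin d → ℝ) (e : ℕ → V × R × V → Fin d → ℝ)
    (hh0 : ∀ z : V, h 0 z = 0)
    (he0 : ∀ t : V × R × V, e 0 t = if t = (u, rt, v) then r rt else 0)
    (hh : ∀ k : ℕ, 1 ≤ k → ∀ z : V,
      h k z = ∑ t ∈ T.filter (fun t => t.2.2 = z), (h (k - 1) t.1 + e (k - 1) t) * r t.2.1)
    (he : ∀ k : ℕ, 1 ≤ k → ∀ t ∈ T, e k t = h k t.1 + e (k - 1) t) :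
    ∀ (k : ℕ) (z : V), ¬ ReachableFrom T v z → h k z = 0 := by
  have key : ∀ k : ℕ, (∀ z : V, ¬ ReachableFrom T v z → h k z = 0) ∧
      (∀ t ∈ T, ¬ ReachableFrom T v t.2.2 → e k t = 0) := by
    intro k
    induction k with
    | zero =>
      refine ⟨fun z _ => hh0 z, fun t _ hz => ?_⟩
      rw [he0]
      have : t ≠ (u, rt, v) := by
        intro heq
        apply hz
        rw [heq]
        exact Or.inl rfl
      simp [this]
    | succ k ih =>
      have hstep : ∀ z : V, ¬ ReachableFrom T v z → h (k + 1) z = 0 := by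
        intro z hz
        rw [hh (k + 1) (by omega) z]
        apply Finset.sum_eq_zero
        intro t htm
        rw [Finset.mem_filter] at htm
        obtain ⟨htT, htz⟩ := htm
        have h1 : ¬ ReachableFrom T v t.1 := fun hr => (htz ▸ hz) (reach_step T v t htT hr)
        simp only [Nat.add_sub_cancel]
        rw [ih.1 t.1 h1, ih.2 t htT (htz ▸ hz)]
        simp
      refine ⟨hstep, ?_⟩
      intro t htT hz
      have h1 : ¬ ReachableFrom T v t.1 := fun hr => hz (reach_step T v t htT hr)
      rw [he (k + 1) (by omega) t htT, hstep t.1 h1]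
      simp only [Nat.add_sub_cancel]
      rw [ih.2 t htT hz]
      simp
  exact fun k z hz => (key k).1 z hz
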